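/- Let |A_0| = |A_1| = |B_0| = |B_1| = d. There exists a DISC superchannel Θ such that Θ[F_d] = R_d, i.e., the maximal replacement channel can be obtained from the quantum Fourier transform channel by a dephasing-covariant incoherent superchannel. -/

import Mathlib

open scoped ComplexOrder

noncomputable section

namespace DynCoh

/-- The space of linear maps from operators on `A` to operators on `B`
(candidate quantum channels). -/
abbrev QChanMap (A B : Type) [Fintype A] [Fintype B] : Type :=
  Matrix A A ℂ →ₗ[ℂ] Matrix B B ℂ

section Basic

variable {A0 A1 B0 B1 : Type} [Fintype A0] [Fintype A1] [Fintype B0] [Fintype B1]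

/-- `id_E ⊗ M` : the extension of a supermap `M` by the identity on a reference system `E`. -/
def extendL (E : Type) [Fintype E] (M : QChanMap A0 A1) :
    QChanMap (E × A0) (E × A1) where
  toFun X := Matrix.of fun p q => M (Matrix.of fun a a' => X (p.1, a) (q.1, a')) p.2 q.2
  map_add' X Y := by
    ext p q
    show M (Matrix.of fun a a' => (X + Y) (p.1, a) (q.1, a')) p.2 q.2 = _
    have h : (Matrix.of fun a a' => (X + Y) (p.1, a) (q.1, a'))
        = (Matrix.of fun a a' => X (p.1, a) (q.1, a'))
          + (Matrix.of fun a a' => Y (p.1, a) (q.1, a')) := rfl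
    rw [h, map_add]
    rfl
  map_smul' c X := by
    ext p q
    show M (Matrix.of fun a a' => (c • X) (p.1, a) (q.1, a')) p.2 q.2 = _
    have h : (Matrix.of fun a a' => (c • X) (p.1, a) (q.1, a'))
        = c • (Matrix.of fun a a' => X (p.1, a) (q.1, a')) := rfl
    rw [h, map_smul]
    rfl

/-- Complete positivity: `id_n ⊗ M` maps positive semidefinite matrices to
positive semidefinite matrices, for every finite reference dimension `n`. -/
def CompletelyPositive (M : QChanMap A0 A1) : Prop :=
  ∀ (n : ℕ) (X : Matrix (Fin n × A0) (Fin n × A0) ℂ),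
    X.PosSemidef → ((extendL (Fin n) M) X).PosSemidef

/-- Trace preservation. -/
def TracePreserving (M : QChanMap A0 A1) : Prop :=
  ∀ X : Matrix A0 A0 ℂ, (M X).trace = X.trace

/-- A quantum channel: a completely positive trace-preserving linear map. -/
def IsCPTP (M : QChanMap A0 A1) : Prop :=
  CompletelyPositive M ∧ TracePreserving M

end Basic

/-- The completely dephasing channel `D(ρ) = Σ_i |i⟩⟨i| ρ |i⟩⟨i|` (in the fixed
incoherent basis). -/
def dephasingMap (A : Type) [Fintype A] [DecidableEq A] : QChanMap A A where
  toFun X := Matrix.of fun i j => if i = j then X i j else 0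
  map_add' X Y := by
    ext i j
    by_cases h : i = j <;> simp [h, Matrix.add_apply]
  map_smul' c X := by
    ext i j
    by_cases h : i = j <;> simp [h, Matrix.smul_apply]

section Deph

variable {A0 A1 B0 B1 : Type} [Fintype A0] [Fintype A1] [Fintype B0] [Fintype B1]

/-- The dephasing superchannel `Δ[N] = D ∘ N ∘ D`. -/
def dephChan [DecidableEq A0] [DecidableEq A1] (N : QChanMap A0 A1) : QChanMap A0 A1 :=
  (dephasingMap A1) ∘ₗ N ∘ₗ (dephasingMap A0)

/-- A classical channel: a quantum channel satisfying `N = D ∘ N ∘ D`. -/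
def IsClassical [DecidableEq A0] [DecidableEq A1] (N : QChanMap A0 A1) : Prop :=
  IsCPTP N ∧ N = dephChan N

end Deph

/-- A superchannel from channels `A0 → A1` to channels `B0 → B1`, given by pre- and
post-processing quantum channels together with a reference (memory) system `Fin E`. -/
structure Superchannel (A0 A1 B0 B1 : Type)
    [Fintype A0] [Fintype A1] [Fintype B0] [Fintype B1] where
  E : ℕ
  pre : QChanMap B0 (Fin E × A0)
  post : QChanMap (Fin E × A1) B1
  pre_cptp : IsCPTP pre
  post_cptp : IsCPTP post

section Super

variable {A0 A1 B0 B1 : Type} [Fintype A0] [Fintype A1] [Fintype B0] [Fintype B1]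

/-- Action of a superchannel on a (candidate) channel: `Θ[N] = Q ∘ (id_E ⊗ N) ∘ P`. -/
def Superchannel.app (Θ : Superchannel A0 A1 B0 B1) (N : QChanMap A0 A1) :
    QChanMap B0 B1 :=
  Θ.post ∘ₗ (extendL (Fin Θ.E) N) ∘ₗ Θ.pre

/-- A maximally incoherent superchannel (MISC): maps every classical channel to a
classical channel. -/
def IsMISC [DecidableEq A0] [DecidableEq A1] [DecidableEq B0] [DecidableEq B1]
    (Θ : Superchannel A0 A1 B0 B1) : Prop :=
  ∀ N : QChanMap A0 A1, IsClassical N → IsClassical (Θ.app N)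

/-- A dephasing-covariant incoherent superchannel (DISC): `Δ ∘ Θ = Θ ∘ Δ`. -/
def IsDISC [DecidableEq A0] [DecidableEq A1] [DecidableEq B0] [DecidableEq B1]
    (Θ : Superchannel A0 A1 B0 B1) : Prop :=
  ∀ N : QChanMap A0 A1, dephChan (Θ.app N) = Θ.app (dephChan N)

end Super

/-- The trace norm `‖X‖₁ = Tr √(Xᴴ X)` of a matrix. -/
def traceNorm {A : Type} [Fintype A] [DecidableEq A] (X : Matrix A A ℂ) : ℝ :=
  (((Matrix.posSemidef_conjTranspose_mul_self X).1.eigenvectorUnitary.1 *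
      Matrix.diagonal (fun i => ((Real.sqrt
        ((Matrix.posSemidef_conjTranspose_mul_self X).1.eigenvalues i) : ℝ) : ℂ)) *
      (star (Matrix.posSemidef_conjTranspose_mul_self X).1.eigenvectorUnitary :
        Matrix A A ℂ)).trace).re

/-- A density matrix (state): positive semidefinite with unit trace. -/
def IsState {A : Type} [Fintype A] (ρ : Matrix A A ℂ) : Prop :=
  ρ.PosSemidef ∧ ρ.trace = 1

/-- A pure state: a rank-one projector, i.e. a state which is idempotent. -/
def IsPureState {A : Type} [Fintype A] (ρ : Matrix A A ℂ) : Prop :=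
  IsState ρ ∧ ρ * ρ = ρ

section Norms

variable {A0 A1 : Type} [Fintype A0] [Fintype A1] [DecidableEq A1]

/-- The diamond norm `‖X‖◇ = sup_ρ ‖(id_R ⊗ X)(ρ)‖₁`, the supremum running over all
finite reference systems `R` and all states `ρ` on `R ⊗ A0`. -/
def diamondNorm (X : QChanMap A0 A1) : ℝ :=
  ⨆ (n : ℕ), ⨆ ρ : {ρ : Matrix (Fin n × A0) (Fin n × A0) ℂ // IsState ρ},
    traceNorm ((extendL (Fin n) X) ρ.1)

end Norms

/-- Max-relative entropy of states: `D_max(ρ‖σ) = log₂ min{λ ≥ 0 : λσ - ρ ⪰ 0}`. -/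
def DmaxState {A : Type} [Fintype A] (ρ σ : Matrix A A ℂ) : ℝ :=
  Real.logb 2 (sInf {lam : ℝ | 0 ≤ lam ∧ ((lam : ℂ) • σ - ρ).PosSemidef})

section Entropies

variable {A0 A1 : Type} [Fintype A0] [Fintype A1]

/-- Max-relative entropy of channels:
`D̂_max(N‖M) = log₂ min{λ ≥ 0 : λM - N is completely positive}`. -/
def Dmax (N M : QChanMap A0 A1) : ℝ :=
  Real.logb 2 (sInf {lam : ℝ | 0 ≤ lam ∧ CompletelyPositive ((lam : ℂ) • M - N)})

variable [DecidableEq A0] [DecidableEq A1]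

/-- Log-robustness of coherence of a channel: `L̂R(N) = min_{M classical} D̂_max(N‖M)`. -/
def logRob (N : QChanMap A0 A1) : ℝ :=
  sInf {x : ℝ | ∃ M : QChanMap A0 A1, IsClassical M ∧ x = Dmax N M}

/-- Smoothed log-robustness of coherence:
`L̂R_ε(N) = min{L̂R(N') : N' a channel with ½‖N - N'‖◇ ≤ ε}`. -/
def logRobS (ε : ℝ) (N : QChanMap A0 A1) : ℝ :=
  sInf {x : ℝ | ∃ N' : QChanMap A0 A1,
    IsCPTP N' ∧ (1/2) * diamondNorm (N - N') ≤ ε ∧ x = logRob N'}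

/-- Dephasing log-robustness of coherence: `L̂R_Δ(N) = D̂_max(N‖Δ[N])`. -/
def logRobD (N : QChanMap A0 A1) : ℝ :=
  Dmax N (dephChan N)

/-- Smoothed dephasing log-robustness of coherence:
`L̂R_{ε,Δ}(N) = min{D̂_max(N'‖Δ[N']) : N' a channel with ½‖N - N'‖◇ ≤ ε}`. -/
def logRobDS (ε : ℝ) (N : QChanMap A0 A1) : ℝ :=
  sInf {x : ℝ | ∃ N' : QChanMap A0 A1,
    IsCPTP N' ∧ (1/2) * diamondNorm (N - N') ≤ ε ∧ x = logRobD N'}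

end Entropies

/-- The unitary conjugation channel `ρ ↦ U ρ Uᴴ`. -/
def conjChan {A : Type} [Fintype A] (U : Matrix A A ℂ) : QChanMap A A where
  toFun ρ := U * ρ * U.conjTranspose
  map_add' X Y := by simp [Matrix.mul_add, Matrix.add_mul]
  map_smul' c X := by simp [Matrix.mul_smul, Matrix.smul_mul]

/-- The quantum Fourier transform unitary
`F_d = (1/√d) Σ_{j,k} e^{2πijk/d} |j⟩⟨k|`. -/
def QFTmat (d : ℕ) : Matrix (Fin d) (Fin d) ℂ :=
  Matrix.of fun j k =>
    (((Real.sqrt d : ℝ) : ℂ))⁻¹ *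
      Complex.exp (2 * Real.pi * Complex.I * (j : ℕ) * (k : ℕ) / d)

/-- The quantum Fourier transform channel `F_d(ρ) = F_d ρ F_d†`. -/
def QFTChan (d : ℕ) : QChanMap (Fin d) (Fin d) :=
  conjChan (QFTmat d)

/-- The maximally coherent state `ψ_d⁺ = (1/d) Σ_{j,k} |j⟩⟨k|`. -/
def maxCohState (d : ℕ) : Matrix (Fin d) (Fin d) ℂ :=
  Matrix.of fun _ _ => (d : ℂ)⁻¹

/-- The maximal replacement channel `R_d(ρ) = Tr(ρ) ψ_d⁺`. -/
def replChan (d : ℕ) : QChanMap (Fin d) (Fin d) where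
  toFun ρ := ρ.trace • maxCohState d
  map_add' X Y := by simp [Matrix.trace_add, add_smul]
  map_smul' c X := by simp [Matrix.trace_smul, smul_smul]

/-- The normalized Choi matrix `J^N = (id ⊗ N)(φ⁺)`, with entries
`J^N_{(i,k),(j,l)} = (1/|A0|) N(|i⟩⟨j|)_{k,l}`. -/
def choi {A0 A1 : Type} [Fintype A0] [Fintype A1] [DecidableEq A0]
    (N : QChanMap A0 A1) : Matrix (A0 × A1) (A0 × A1) ℂ :=
  Matrix.of fun p q =>
    (Fintype.card A0 : ℂ)⁻¹ * N (Matrix.single p.1 q.1 1) p.2 q.2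

/-- Hypothesis-testing relative entropy of states:
`H_ε(ρ‖σ) = -log₂ min{Tr[Pσ] : 0 ≤ P ≤ I, Tr[Pρ] ≥ 1-ε}`. -/
def Hent (ε : ℝ) {A : Type} [Fintype A] [DecidableEq A] (ρ σ : Matrix A A ℂ) : ℝ :=
  - Real.logb 2 (sInf {x : ℝ | ∃ P : Matrix A A ℂ,
      P.PosSemidef ∧ ((1 : Matrix A A ℂ) - P).PosSemidef ∧
      1 - ε ≤ ((P * ρ).trace).re ∧ x = ((P * σ).trace).re})

section HypTest

variable {A0 A1 : Type} [Fintype A0] [Fintype A1] [DecidableEq A1]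

/-- The hypothesis-testing channel divergence
`Ĥ_ε(N‖M) = max_ψ H_ε((id⊗N)(ψ)‖(id⊗M)(ψ))`, the maximum running over all pure states
on a reference system tensored with the input. -/
def HentChan (ε : ℝ) (N M : QChanMap A0 A1) : ℝ :=
  ⨆ (n : ℕ), ⨆ ψ : {ρ : Matrix (Fin n × A0) (Fin n × A0) ℂ // IsPureState ρ},
    Hent ε ((extendL (Fin n) N) ψ.1) ((extendL (Fin n) M) ψ.1)

variable [DecidableEq A0]

/-- The hypothesis-testing relative entropy of coherence
`C_H^ε(N) = min_{M classical} Ĥ_ε(N‖M)`. -/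
def CH (ε : ℝ) (N : QChanMap A0 A1) : ℝ :=
  sInf {x : ℝ | ∃ M : QChanMap A0 A1, IsClassical M ∧ x = HentChan ε N M}

/-- The dephasing hypothesis-testing relative entropy of coherence
`C_{H,Δ}^ε(N) = Ĥ_ε(N‖Δ[N])`. -/
def CHD (ε : ℝ) (N : QChanMap A0 A1) : ℝ :=
  HentChan ε N (dephChan N)

end HypTest

section Rob

variable {A0 A1 B0 B1 : Type} [Fintype A0] [Fintype A1] [Fintype B0] [Fintype B1]
variable [DecidableEq A0] [DecidableEq A1] [DecidableEq B0] [DecidableEq B1]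

/-- Robustness of coherence of a channel:
`Ĉ_R(N) = min{s ≥ 0 : (N + sM)/(1+s) is classical for some channel M}`. -/
def robC (N : QChanMap A0 A1) : ℝ :=
  sInf {s : ℝ | 0 ≤ s ∧ ∃ M : QChanMap A0 A1, IsCPTP M ∧
    IsClassical ((((1 + s : ℝ) : ℂ))⁻¹ • (N + ((s : ℝ) : ℂ) • M))}

/-- A `δ`-MISC superchannel: `Ĉ_R(Θ[N]) ≤ δ` for every classical channel `N`. -/
def IsDeltaMISC (δ : ℝ) (Θ : Superchannel A0 A1 B0 B1) : Prop :=
  ∀ N : QChanMap A0 A1, IsClassical N → robC (Θ.app N) ≤ δ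

end Rob

section Tensor

variable {A0 A1 B0 B1 : Type} [Fintype A0] [Fintype A1] [Fintype B0] [Fintype B1]
variable [DecidableEq A0] [DecidableEq B0]

/-- The tensor product `N ⊗ M` of two (candidate) channels. -/
def tensorChan (N : QChanMap A0 A1) (M : QChanMap B0 B1) :
    QChanMap (A0 × B0) (A1 × B1) where
  toFun X := Matrix.of fun p q =>
    ∑ a : A0, ∑ a' : A0, ∑ b : B0, ∑ b' : B0,
      X (a, b) (a', b') *
        (N (Matrix.single a a' 1) p.1 q.1 *
          M (Matrix.single b b' 1) p.2 q.2)
  map_add' X Y := by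
    ext p q
    simp [Matrix.add_apply, add_mul, Finset.sum_add_distrib]
  map_smul' c X := by
    ext p q
    simp [Matrix.smul_apply, smul_eq_mul, mul_assoc, Finset.mul_sum]

/-- The `n`-fold tensor power `N^{⊗n}` of a (candidate) channel. -/
def powChan (n : ℕ) (N : QChanMap A0 A1) :
    QChanMap (Fin n → A0) (Fin n → A1) where
  toFun X := Matrix.of fun f g =>
    ∑ h : Fin n → A0, ∑ h' : Fin n → A0,
      X h h' * ∏ i : Fin n, N (Matrix.single (h i) (h' i) 1) (f i) (g i)
  map_add' X Y := by
    ext f g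
    simp [Matrix.add_apply, add_mul, Finset.sum_add_distrib]
  map_smul' c X := by
    ext f g
    simp [Matrix.smul_apply, smul_eq_mul, mul_assoc, Finset.mul_sum]

end Tensor

section Tasks

variable {B0 B1 : Type} [Fintype B0] [Fintype B1] [DecidableEq B0] [DecidableEq B1]

/-- One-shot dynamic coherence cost under MISC superchannels:
`c¹_{ε,MISC}(N) = min{log₂ d² : ½‖N - Θ[F_d]‖◇ ≤ ε for some MISC Θ}`. -/
def costMISC (ε : ℝ) (N : QChanMap B0 B1) : ℝ :=
  sInf {x : ℝ | ∃ d : ℕ, ∃ Θ : Superchannel (Fin d) (Fin d) B0 B1, IsMISC Θ ∧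
    (1/2) * diamondNorm (N - Θ.app (QFTChan d)) ≤ ε ∧ x = Real.logb 2 ((d : ℝ)^2)}

/-- One-shot dynamic coherence cost under DISC superchannels. -/
def costDISC (ε : ℝ) (N : QChanMap B0 B1) : ℝ :=
  sInf {x : ℝ | ∃ d : ℕ, ∃ Θ : Superchannel (Fin d) (Fin d) B0 B1, IsDISC Θ ∧
    (1/2) * diamondNorm (N - Θ.app (QFTChan d)) ≤ ε ∧ x = Real.logb 2 ((d : ℝ)^2)}

/-- One-shot dynamic coherence distillation under MISC superchannels:
`d¹_{ε,MISC}(N) = max{log₂ d² : ½‖Θ[N] - F_d‖◇ ≤ ε for some MISC Θ}`. -/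
def distillMISC (ε : ℝ) (N : QChanMap B0 B1) : ℝ :=
  sSup {x : ℝ | ∃ d : ℕ, ∃ Θ : Superchannel B0 B1 (Fin d) (Fin d), IsMISC Θ ∧
    (1/2) * diamondNorm (Θ.app N - QFTChan d) ≤ ε ∧ x = Real.logb 2 ((d : ℝ)^2)}

/-- One-shot dynamic coherence distillation under DISC superchannels. -/
def distillDISC (ε : ℝ) (N : QChanMap B0 B1) : ℝ :=
  sSup {x : ℝ | ∃ d : ℕ, ∃ Θ : Superchannel B0 B1 (Fin d) (Fin d), IsDISC Θ ∧
    (1/2) * diamondNorm (Θ.app N - QFTChan d) ≤ ε ∧ x = Real.logb 2 ((d : ℝ)^2)}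

/-- Regularized smoothed coherence cost under MISC:
`c^∞_{MISC}(N) = lim_{ε→0⁺} lim_{n→∞} (1/n) c¹_{ε,MISC}(N^{⊗n})`. -/
def costRegMISC (N : QChanMap B0 B1) : ℝ :=
  Filter.limUnder (nhdsWithin (0 : ℝ) (Set.Ioi 0)) fun ε : ℝ =>
    Filter.limUnder Filter.atTop fun n : ℕ => (n : ℝ)⁻¹ * costMISC ε (powChan n N)

/-- Regularized smoothed coherence cost under DISC. -/
def costRegDISC (N : QChanMap B0 B1) : ℝ :=
  Filter.limUnder (nhdsWithin (0 : ℝ) (Set.Ioi 0)) fun ε : ℝ =>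
    Filter.limUnder Filter.atTop fun n : ℕ => (n : ℝ)⁻¹ * costDISC ε (powChan n N)

/-- Asymptotic log-robustness:
`L̂R^∞(N) = lim_{ε→0⁺} liminf_{n→∞} (1/n) L̂R_ε(N^{⊗n})`. -/
def logRobReg (N : QChanMap B0 B1) : ℝ :=
  Filter.limUnder (nhdsWithin (0 : ℝ) (Set.Ioi 0)) fun ε : ℝ =>
    Filter.liminf (fun n : ℕ => (n : ℝ)⁻¹ * logRobS ε (powChan n N)) Filter.atTop

/-- Asymptotic dephasing log-robustness. -/
def logRobDReg (N : QChanMap B0 B1) : ℝ :=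
  Filter.limUnder (nhdsWithin (0 : ℝ) (Set.Ioi 0)) fun ε : ℝ =>
    Filter.liminf (fun n : ℕ => (n : ℝ)⁻¹ * logRobDS ε (powChan n N)) Filter.atTop

end Tasks

section Catalytic

variable {a0 a1 : ℕ}

/-- One-shot catalytic dynamic coherence cost under `δ`-MISC superchannels:
the least `log₂ d²` such that a `δ`-MISC superchannel converts `F_d ⊗ F_l`
(for some catalyst dimension `l`) exactly into `N' ⊗ F_l` with `½‖N' - N‖◇ ≤ ε`. -/
def catCost (ε δ : ℝ) (N : QChanMap (Fin a0) (Fin a1)) : ℝ :=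
  sInf {x : ℝ | ∃ d l : ℕ,
    ∃ Θ : Superchannel (Fin d × Fin l) (Fin d × Fin l) (Fin a0 × Fin l) (Fin a1 × Fin l),
    ∃ N' : QChanMap (Fin a0) (Fin a1), IsCPTP N' ∧
      IsDeltaMISC δ Θ ∧
      Θ.app (tensorChan (QFTChan d) (QFTChan l)) = tensorChan N' (QFTChan l) ∧
      (1/2) * diamondNorm (N' - N) ≤ ε ∧ x = Real.logb 2 ((d : ℝ)^2)}

end Catalytic


section Stmt18Aux

open Matrix

lemma fin_val_zero_iff {m : ℕ} (a : Fin (m + 1)) : (a : ℕ) = 0 ↔ a = 0 :=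
  ⟨fun h => Fin.ext h, fun h => by subst h; rfl⟩

lemma sum_fin_ite {m : ℕ} (f : Fin (m + 1) → ℂ) :
    (∑ x : Fin (m + 1), if (x : ℕ) = 0 then f x else 0) = f 0 := by
  simp only [fin_val_zero_iff]
  simp

/-- The weight vector `|0⟩` on `Fin 1 × Fin d` (zero vector when `d = 0`). -/
def wv (d : ℕ) : Fin 1 × Fin d → ℂ := fun p => if (p.2 : ℕ) = 0 then 1 else 0

/-- The pure state `|0⟩⟨0|` on `Fin 1 × Fin d`. -/
def sig (d : ℕ) : Matrix (Fin 1 × Fin d) (Fin 1 × Fin d) ℂ :=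
  Matrix.of fun p q => wv d p * star (wv d q)

/-- Preprocessing: replace the input by `|0⟩⟨0|`. -/
def preMap (d : ℕ) : QChanMap (Fin d) (Fin 1 × Fin d) where
  toFun X := X.trace • sig d
  map_add' X Y := by simp [Matrix.trace_add, add_smul]
  map_smul' c X := by simp [Matrix.trace_smul, smul_smul]

/-- Postprocessing: strip the trivial `Fin 1` factor. -/
def postMap (d : ℕ) : QChanMap (Fin 1 × Fin d) (Fin d) where
  toFun Y := Matrix.of fun i j => Y (0, i) (0, j)
  map_add' X Y := by ext i j; simp
  map_smul' c X := by ext i j; simp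

lemma posSemidef_sum {n : Type} [Fintype n] {ι : Type} (s : Finset ι)
    (f : ι → Matrix n n ℂ) (h : ∀ i ∈ s, (f i).PosSemidef) :
    (∑ i ∈ s, f i).PosSemidef := by
  classical
  induction s using Finset.induction with
  | empty => simpa using Matrix.PosSemidef.zero
  | @insert a s hx ih =>
    rw [Finset.sum_insert hx]
    have h1 := h a (Finset.mem_insert_self a s)
    have h2 := ih fun i hi => h i (Finset.mem_insert_of_mem hi)
    exact h1.add h2

/-- Kraus-type operators witnessing complete positivity of `preMap`. -/
def Tmat (d n : ℕ) (a : Fin d) :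
    Matrix (Fin n × (Fin 1 × Fin d)) (Fin n × Fin d) ℂ :=
  Matrix.of fun p u => (if p.1 = u.1 ∧ u.2 = a then 1 else 0) * wv d p.2

lemma extendL_preMap_eq (d n : ℕ) (X : Matrix (Fin n × Fin d) (Fin n × Fin d) ℂ) :
    (extendL (Fin n) (preMap d)) X = ∑ a : Fin d, Tmat d n a * X * (Tmat d n a)ᴴ := by
  ext p q
  show (Matrix.of fun a a' => X (p.1, a) (q.1, a')).trace * sig d p.2 q.2 = _
  rw [Matrix.sum_apply]
  have hterm : ∀ a : Fin d,
      (Tmat d n a * X * (Tmat d n a)ᴴ) p q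
        = wv d p.2 * star (wv d q.2) * X (p.1, a) (q.1, a) := by
    intro a
    have h1 : ∀ v : Fin n × Fin d,
        (Tmat d n a * X) p v = wv d p.2 * X (p.1, a) v := by
      intro v
      rw [Matrix.mul_apply, Fintype.sum_prod_type]
      simp [Tmat, ite_and, mul_comm]
    rw [Matrix.mul_apply]
    simp only [Matrix.conjTranspose_apply, h1]
    simp only [Tmat, Matrix.of_apply, star_mul', apply_ite (star : ℂ → ℂ),
      star_one, star_zero, ite_and]
    rw [Fintype.sum_prod_type]
    simp
    ring
  simp only [hterm]
  have htr : (Matrix.of fun a a' => X (p.1, a) (q.1, a')).trace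
      = ∑ a, X (p.1, a) (q.1, a) := rfl
  rw [htr, Finset.sum_mul]
  refine Finset.sum_congr rfl fun a _ => ?_
  show X (p.1, a) (q.1, a) * (wv d p.2 * star (wv d q.2)) = _
  ring

lemma pre_cp (d : ℕ) : CompletelyPositive (preMap d) := by
  intro n X hX
  rw [extendL_preMap_eq]
  exact posSemidef_sum _ _ fun a _ => hX.mul_mul_conjTranspose_same _

lemma pre_tp (d : ℕ) : TracePreserving (preMap d) := by
  intro X
  show (X.trace • sig d).trace = X.trace
  rw [Matrix.trace_smul, smul_eq_mul]
  cases d with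
  | zero => simp [Matrix.trace]
  | succ m =>
    have hdiag : ∀ p : Fin 1 × Fin (m + 1),
        wv (m + 1) p * star (wv (m + 1) p) = if (p.2 : ℕ) = 0 then 1 else 0 := by
      intro p; by_cases h : (p.2 : ℕ) = 0 <;> simp [wv, h]
    have : (sig (m + 1)).trace = 1 := by
      show (∑ p : Fin 1 × Fin (m + 1), wv (m + 1) p * star (wv (m + 1) p)) = 1
      rw [Finset.sum_congr rfl fun p _ => hdiag p, Fintype.sum_prod_type,
        Fin.sum_univ_one]
      rw [sum_fin_ite (fun _ => (1 : ℂ))]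
    rw [this, mul_one]

lemma post_cp (d : ℕ) : CompletelyPositive (postMap d) := by
  intro n X hX
  have h : (extendL (Fin n) (postMap d)) X
      = X.submatrix (fun r : Fin n × Fin d => (r.1, ((0 : Fin 1), r.2)))
          (fun r : Fin n × Fin d => (r.1, ((0 : Fin 1), r.2))) := by
    ext p q; rfl
  rw [h]
  exact hX.submatrix _

lemma post_tp (d : ℕ) : TracePreserving (postMap d) := by
  intro X
  show (Matrix.of fun i j => X (0, i) (0, j) : Matrix (Fin d) (Fin d) ℂ).trace = X.trace
  simp [Matrix.trace, Matrix.diag, Fintype.sum_prod_type, Fin.sum_univ_one]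

/-- The superchannel realizing `Θ[N] = Tr(·) • N(|0⟩⟨0|)`. -/
def Theta (d : ℕ) : Superchannel (Fin d) (Fin d) (Fin d) (Fin d) where
  E := 1
  pre := preMap d
  post := postMap d
  pre_cptp := ⟨pre_cp d, pre_tp d⟩
  post_cptp := ⟨post_cp d, post_tp d⟩

/-- The matrix `|0⟩⟨0|` on `Fin d` (zero when `d = 0`). -/
def Bmat (d : ℕ) : Matrix (Fin d) (Fin d) ℂ :=
  Matrix.of fun a a' => (if (a : ℕ) = 0 then 1 else 0) * (if (a' : ℕ) = 0 then 1 else 0)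

lemma Theta_app (d : ℕ) (N : QChanMap (Fin d) (Fin d)) (X : Matrix (Fin d) (Fin d) ℂ) :
    (Theta d).app N X = X.trace • Matrix.of (fun i j => N (Bmat d) i j) := by
  have hB : (Matrix.of fun a a' =>
      ((X.trace • sig d) ((0 : Fin 1), a) ((0 : Fin 1), a'))) = X.trace • Bmat d := by
    ext a a'
    simp [sig, wv, Bmat, Matrix.smul_apply, smul_eq_mul, apply_ite (star : ℂ → ℂ)]
  ext i j
  show (extendL (Fin 1) N ((preMap d) X)) ((0 : Fin 1), i) ((0 : Fin 1), j) = _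
  show N (Matrix.of fun a a' =>
      ((X.trace • sig d) ((0 : Fin 1), a) ((0 : Fin 1), a'))) i j = _
  rw [hB, LinearMap.map_smul]
  simp

lemma deph_Bmat (d : ℕ) : dephasingMap (Fin d) (Bmat d) = Bmat d := by
  ext a b
  show (if a = b then Bmat d a b else 0) = Bmat d a b
  by_cases h : a = b
  · simp [h]
  · by_cases ha : (a : ℕ) = 0
    · by_cases hb : (b : ℕ) = 0
      · exact absurd (Fin.val_injective (ha.trans hb.symm)) h
      · simp [Bmat, h, ha, hb]
    · simp [Bmat, h, ha]

lemma Theta_disc (d : ℕ) : IsDISC (Theta d) := by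
  intro N
  apply LinearMap.ext
  intro X
  have htr : ((dephasingMap (Fin d)) X).trace = X.trace := by
    simp [dephasingMap, Matrix.trace, Matrix.diag]
  show (dephasingMap (Fin d)) ((Theta d).app N ((dephasingMap (Fin d)) X))
      = (Theta d).app (dephChan N) X
  rw [Theta_app, Theta_app, htr, LinearMap.map_smul]
  ext i j
  show X.trace * (if i = j then N (Bmat d) i j else 0)
      = X.trace * (dephChan N (Bmat d) i j)
  congr 1
  show _ = (dephasingMap (Fin d)) (N ((dephasingMap (Fin d)) (Bmat d))) i j
  rw [deph_Bmat]
  rfl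

lemma QFT_Bmat (d : ℕ) : QFTChan d (Bmat d) = maxCohState d := by
  cases d with
  | zero => ext i j; exact i.elim0
  | succ m =>
    ext i j
    show (QFTmat (m + 1) * Bmat (m + 1) * (QFTmat (m + 1))ᴴ) i j = maxCohState (m + 1) i j
    have h1 : ∀ a' : Fin (m + 1), (QFTmat (m + 1) * Bmat (m + 1)) i a'
        = QFTmat (m + 1) i 0 * (if (a' : ℕ) = 0 then 1 else 0) := by
      intro a'
      rw [Matrix.mul_apply]
      have : ∀ a : Fin (m + 1), QFTmat (m + 1) i a * Bmat (m + 1) a a'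
          = if (a : ℕ) = 0 then QFTmat (m + 1) i a * (if (a' : ℕ) = 0 then 1 else 0)
            else 0 := by
        intro a
        by_cases h : a = 0 <;> simp [Bmat, h, mul_assoc]
      rw [Finset.sum_congr rfl fun a _ => this a, sum_fin_ite]
    rw [Matrix.mul_apply, Finset.sum_congr rfl fun a' _ => by rw [h1 a']]
    have h2 : ∀ a' : Fin (m + 1),
        QFTmat (m + 1) i 0 * (if (a' : ℕ) = 0 then 1 else 0) * (QFTmat (m + 1))ᴴ a' j
          = if (a' : ℕ) = 0 then QFTmat (m + 1) i 0 * (QFTmat (m + 1))ᴴ a' j else 0 := by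
      intro a'
      by_cases h : (a' : ℕ) = 0 <;> simp [h]
    rw [Finset.sum_congr rfl fun a' _ => h2 a', sum_fin_ite]
    have hq0 : ∀ k : Fin (m + 1), QFTmat (m + 1) k 0
        = ((Real.sqrt ((m + 1 : ℕ) : ℝ) : ℝ) : ℂ)⁻¹ := by
      intro k
      simp [QFTmat]
    rw [Matrix.conjTranspose_apply, hq0 i, hq0 j]
    show _ = ((m + 1 : ℕ) : ℂ)⁻¹
    rw [← Complex.ofReal_inv, Complex.star_def, Complex.conj_ofReal,
      ← Complex.ofReal_mul, ← mul_inv, Real.mul_self_sqrt (by positivity)]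
    push_cast
    ring

lemma Theta_app_QFT (d : ℕ) : (Theta d).app (QFTChan d) = replChan d := by
  apply LinearMap.ext
  intro X
  rw [Theta_app]
  show X.trace • Matrix.of (fun i j => QFTChan d (Bmat d) i j) = X.trace • maxCohState d
  congr 1
  ext i j
  show QFTChan d (Bmat d) i j = maxCohState d i j
  rw [QFT_Bmat]

end Stmt18Aux

/-- There exists a DISC superchannel `Θ` such that `Θ[F_d] = R_d`:
the maximal replacement channel can be obtained from the QFT channel by a
dephasing-covariant incoherent superchannel. -/
theorem stmt18 (d : ℕ) :
    ∃ Θ : Superchannel (Fin d) (Fin d) (Fin d) (Fin d),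
      IsDISC Θ ∧ Θ.app (QFTChan d) = replChan d := by
  exact ⟨Theta d, Theta_disc d, Theta_app_QFT d⟩


end DynCoh
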